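/- In the abstract Biot–Brinkman setting, for every z = (γ, ζ, θ, ψ, q) ∈ X, the element y := (γ, ζ + (1/2)√(κν)·curl θ, −θ, −ψ, −q) ∈ X satisfies ⟨A(z), y⟩ ≥ (1/4)·‖z‖_X² and ‖y‖_X ≤ √2 · ‖z‖_X. (This is the quasi-coercivity Lemma 3.2 of the paper: for every z ∈ X there exists y ∈ X with ⟨A(z), y⟩ ≳ ‖z‖_X² and ‖y‖_X ≤ √2‖z‖_X, with constants independent of the parameters μ, λ, κ, ν, c₀, α.) -/

import Mathlib

open scoped RealInnerProductSpace

/-- The bilinear form (3.3) of the vorticity-based Biot–Brinkman system, on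
`X := U × V × W × P × P`, with `x = (u, v, ω, φ, p)` and `y = (γ, ζ, θ, ψ, q)`. -/
noncomputable def biotBrinkmanForm {U V W P Sig : Type*}
    [NormedAddCommGroup U] [InnerProductSpace ℝ U]
    [NormedAddCommGroup V] [InnerProductSpace ℝ V]
    [NormedAddCommGroup W] [InnerProductSpace ℝ W]
    [NormedAddCommGroup P] [InnerProductSpace ℝ P]
    [NormedAddCommGroup Sig] [InnerProductSpace ℝ Sig]
    (μ lam κ ν c₀ α : ℝ)
    (eps : U →ₗ[ℝ] Sig) (divU : U →ₗ[ℝ] P) (divV : V →ₗ[ℝ] P) (curl : W →ₗ[ℝ] V)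
    (x y : U × V × W × P × P) : ℝ :=
  2 * μ * ⟪eps x.1, eps y.1⟫ - ⟪x.2.2.2.1, divU y.1⟫
    + (1 / κ) * ⟪x.2.1, y.2.1⟫ + (ν / κ) * ⟪divV x.2.1, divV y.2.1⟫
    + Real.sqrt (ν / κ) * ⟪curl x.2.2.1, y.2.1⟫ - ⟪x.2.2.2.2, divV y.2.1⟫
    + Real.sqrt (ν / κ) * ⟪curl y.2.2.1, x.2.1⟫ - ⟪x.2.2.1, y.2.2.1⟫
    - ⟪y.2.2.2.1, divU x.1⟫ - (1 / lam) * ⟪x.2.2.2.1, y.2.2.2.1⟫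
    + (α / lam) * ⟪x.2.2.2.2, y.2.2.2.1⟫
    - ⟪y.2.2.2.2, divV x.2.1⟫ + (α / lam) * ⟪x.2.2.2.1, y.2.2.2.2⟫
    - (c₀ + α ^ 2 / lam) * ⟪x.2.2.2.2, y.2.2.2.2⟫

/-- The square of the parameter-weighted norm (3.2):
`‖x‖_X² = 2μ‖εu‖² + (1/κ)‖v‖² + (ν/κ)‖div v‖² + ‖ω‖² + ν‖curl ω‖² + c₀‖p‖²
  + (1/λ)‖φ − αp‖²`. -/
noncomputable def biotBrinkmanNormXSq {U V W P Sig : Type*}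
    [NormedAddCommGroup U] [InnerProductSpace ℝ U]
    [NormedAddCommGroup V] [InnerProductSpace ℝ V]
    [NormedAddCommGroup W] [InnerProductSpace ℝ W]
    [NormedAddCommGroup P] [InnerProductSpace ℝ P]
    [NormedAddCommGroup Sig] [InnerProductSpace ℝ Sig]
    (μ lam κ ν c₀ α : ℝ)
    (eps : U →ₗ[ℝ] Sig) (divV : V →ₗ[ℝ] P) (curl : W →ₗ[ℝ] V)
    (x : U × V × W × P × P) : ℝ :=
  2 * μ * ‖eps x.1‖ ^ 2 + (1 / κ) * ‖x.2.1‖ ^ 2 + (ν / κ) * ‖divV x.2.1‖ ^ 2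
    + ‖x.2.2.1‖ ^ 2 + ν * ‖curl x.2.2.1‖ ^ 2 + c₀ * ‖x.2.2.2.2‖ ^ 2
    + (1 / lam) * ‖x.2.2.2.1 - α • x.2.2.2.2‖ ^ 2

set_option maxHeartbeats 1600000 in
/-- Quasi-coercivity (Lemma 3.2): for every `z = (γ, ζ, θ, ψ, q) ∈ X`, the element
`y := (γ, ζ + (1/2)√(κν)·curl θ, −θ, −ψ, −q)` satisfies
`⟨A(z), y⟩ ≥ (1/4)‖z‖_X²` and `‖y‖_X ≤ √2‖z‖_X`,
with constants independent of the parameters `μ, λ, κ, ν, c₀, α`. -/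
theorem biotBrinkman_quasi_coercivity {U V W P Sig : Type*}
    [NormedAddCommGroup U] [InnerProductSpace ℝ U]
    [NormedAddCommGroup V] [InnerProductSpace ℝ V]
    [NormedAddCommGroup W] [InnerProductSpace ℝ W]
    [NormedAddCommGroup P] [InnerProductSpace ℝ P]
    [NormedAddCommGroup Sig] [InnerProductSpace ℝ Sig]
    (μ lam κ ν c₀ α : ℝ)
    (hμ : 0 < μ) (hlam : 0 < lam) (hκ : 0 < κ) (hν : 0 < ν) (hc₀ : 0 < c₀)
    (hα : 0 < α)
    (eps : U →ₗ[ℝ] Sig) (divU : U →ₗ[ℝ] P) (divV : V →ₗ[ℝ] P) (curl : W →ₗ[ℝ] V)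
    (hdivcurl : ∀ θ : W, divV (curl θ) = 0)
    (γ : U) (ζ : V) (θ : W) (ψ q : P) :
    biotBrinkmanForm μ lam κ ν c₀ α eps divU divV curl (γ, ζ, θ, ψ, q)
        (γ, ζ + ((1 / 2) * Real.sqrt (κ * ν)) • curl θ, -θ, -ψ, -q) ≥
      (1 / 4) * biotBrinkmanNormXSq μ lam κ ν c₀ α eps divV curl (γ, ζ, θ, ψ, q) ∧
    Real.sqrt (biotBrinkmanNormXSq μ lam κ ν c₀ α eps divV curl
        (γ, ζ + ((1 / 2) * Real.sqrt (κ * ν)) • curl θ, -θ, -ψ, -q)) ≤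
      Real.sqrt 2 *
        Real.sqrt (biotBrinkmanNormXSq μ lam κ ν c₀ α eps divV curl (γ, ζ, θ, ψ, q)) := by

  set s := Real.sqrt (ν / κ) with hs
  set t := Real.sqrt (κ * ν) with htdef
  have hs0 : 0 ≤ s := Real.sqrt_nonneg _
  have htnn : 0 ≤ t := Real.sqrt_nonneg _
  have hs2 : s ^ 2 = ν / κ := Real.sq_sqrt (by positivity)
  have hts : t = κ * s := by
    rw [htdef, hs, show κ * ν = κ ^ 2 * (ν / κ) by field_simp,
      Real.sqrt_mul (by positivity), Real.sqrt_sq hκ.le]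
  have hκs : κ * s ^ 2 = ν := by rw [hs2]; field_simp
  have ht2' : t ^ 2 = κ * ν := by rw [hts]; linear_combination κ * hκs
  have hCS : ⟪ζ, curl θ⟫ ≤ ‖ζ‖ * ‖curl θ‖ := real_inner_le_norm _ _
  have hCS' : -(‖ζ‖ * ‖curl θ‖) ≤ ⟪ζ, curl θ⟫ := by
    have := abs_real_inner_le_norm ζ (curl θ); rw [abs_le] at this; exact this.1
  have hψq : ‖ψ - α • q‖ ^ 2 = ‖ψ‖ ^ 2 - 2 * α * ⟪ψ, q⟫ + α ^ 2 * ‖q‖ ^ 2 := by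
    rw [norm_sub_sq_real, real_inner_smul_right, norm_smul]
    have : ‖α‖ = α := by rw [Real.norm_eq_abs, abs_of_nonneg hα.le]
    rw [this]; ring
  clear_value s t
  constructor
  · simp only [biotBrinkmanForm, biotBrinkmanNormXSq, map_add, map_smul, map_neg,
      hdivcurl, smul_zero, add_zero, inner_add_right, inner_neg_right, inner_neg_left,
      real_inner_smul_right, real_inner_self_eq_norm_sq, neg_neg, inner_zero_right]
    rw [← hs]
    have e1 : (1:ℝ) / κ * (‖ζ‖ ^ 2 + 1 / 2 * t * ⟪ζ, curl θ⟫)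
        = 1 / κ * ‖ζ‖ ^ 2 + (1 / 2) * s * ⟪ζ, curl θ⟫ := by
      rw [hts]; field_simp
    have e2 : s * (⟪curl θ, ζ⟫ + 1 / 2 * t * ‖curl θ‖ ^ 2)
        = s * ⟪curl θ, ζ⟫ + (ν / 2) * ‖curl θ‖ ^ 2 := by
      rw [hts]; linear_combination (‖curl θ‖ ^ 2 / 2) * hκs
    have hM1 : -((1 / 2) * ‖ζ‖ ^ 2 + (κ * ν / 2) * ‖curl θ‖ ^ 2) ≤ t * ⟪ζ, curl θ⟫ := by
      nlinarith [ht2', mul_le_mul_of_nonneg_left hCS' htnn,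
        sq_nonneg (‖ζ‖ - t * ‖curl θ‖)]
    have hcross : -((1 / 4) * ((1 / κ) * ‖ζ‖ ^ 2) + (ν / 4) * ‖curl θ‖ ^ 2)
        ≤ (1 / 2) * s * ⟪ζ, curl θ⟫ := by
      have hpos : (0:ℝ) ≤ 1 / (2 * κ) := by positivity
      have h := mul_le_mul_of_nonneg_left hM1 hpos
      have e_s : (1 / (2 * κ)) * (t * ⟪ζ, curl θ⟫) = (1 / 2) * s * ⟪ζ, curl θ⟫ := by
        rw [hts]; field_simp
      have e_r : (1 / (2 * κ)) * ((1 / 2) * ‖ζ‖ ^ 2 + (κ * ν / 2) * ‖curl θ‖ ^ 2)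
          = (1 / 4) * ((1 / κ) * ‖ζ‖ ^ 2) + (ν / 4) * ‖curl θ‖ ^ 2 := by
        field_simp; ring
      linarith [h, e_s, e_r]
    have hPe : (1 / lam) * ‖ψ - α • q‖ ^ 2
        = 1 / lam * ‖ψ‖ ^ 2 - 2 * (α / lam) * ⟪ψ, q⟫ + α ^ 2 / lam * ‖q‖ ^ 2 := by
      rw [hψq]; ring
    have hcomm : ⟪q, ψ⟫ = ⟪ψ, q⟫ := real_inner_comm ψ q
    have hA : (0:ℝ) ≤ μ * ‖eps γ‖ ^ 2 := by positivity
    have hB : (0:ℝ) ≤ 1 / κ * ‖ζ‖ ^ 2 := by positivity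
    have hD : (0:ℝ) ≤ ν / κ * ‖divV ζ‖ ^ 2 := by positivity
    have hC : (0:ℝ) ≤ ν * ‖curl θ‖ ^ 2 := by positivity
    have hQ : (0:ℝ) ≤ c₀ * ‖q‖ ^ 2 := by positivity
    have hθ2 : (0:ℝ) ≤ ‖θ‖ ^ 2 := sq_nonneg _
    have hP : (0:ℝ) ≤ (1 / lam) * ‖ψ - α • q‖ ^ 2 := by positivity
    rw [e1, e2, show (inner ℝ q ψ : ℝ) = ⟪ψ, q⟫ from real_inner_comm ψ q]
    linarith [hcross, hPe, hA, hB, hD, hC, hQ, hθ2, hP]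
  · have hexp : ‖ζ + ((1 / 2) * t) • curl θ‖ ^ 2
        = ‖ζ‖ ^ 2 + 2 * ((1 / 2) * t) * ⟪ζ, curl θ⟫
          + ((1 / 2) * t) ^ 2 * ‖curl θ‖ ^ 2 := by
      rw [norm_add_sq_real, real_inner_smul_right, norm_smul]
      have : ‖(1 / 2) * t‖ = (1 / 2) * t := by
        rw [Real.norm_eq_abs, abs_of_nonneg]; positivity
      rw [this]; ring
    have hmono : biotBrinkmanNormXSq μ lam κ ν c₀ α eps divV curl
        (γ, ζ + ((1 / 2) * t) • curl θ, -θ, -ψ, -q)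
        ≤ 2 * biotBrinkmanNormXSq μ lam κ ν c₀ α eps divV curl (γ, ζ, θ, ψ, q) := by
      simp only [biotBrinkmanNormXSq, map_add, map_smul, map_neg, hdivcurl, smul_zero,
        add_zero, norm_neg]
      have hneg : ‖-ψ - α • -q‖ = ‖ψ - α • q‖ := by
        rw [show -ψ - α • -q = -(ψ - α • q) from by rw [smul_neg]; abel, norm_neg]
      rw [hexp, hneg]
      have hM : ‖ζ‖ ^ 2 + 2 * ((1 / 2) * t) * ⟪ζ, curl θ⟫
          + ((1 / 2) * t) ^ 2 * ‖curl θ‖ ^ 2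
          ≤ 2 * ‖ζ‖ ^ 2 + (κ * ν / 2) * ‖curl θ‖ ^ 2 := by
        nlinarith [ht2', mul_le_mul_of_nonneg_left hCS htnn,
          sq_nonneg (‖ζ‖ - (t / 2) * ‖curl θ‖)]
      have hkey := mul_le_mul_of_nonneg_left hM (by positivity : (0:ℝ) ≤ 1 / κ)
      have e_r : (1 / κ) * (2 * ‖ζ‖ ^ 2 + (κ * ν / 2) * ‖curl θ‖ ^ 2)
          = 2 * ((1 / κ) * ‖ζ‖ ^ 2) + (ν / 2) * ‖curl θ‖ ^ 2 := by
        field_simp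
      have hA : (0:ℝ) ≤ μ * ‖eps γ‖ ^ 2 := by positivity
      have hB : (0:ℝ) ≤ 1 / κ * ‖ζ‖ ^ 2 := by positivity
      have hD : (0:ℝ) ≤ ν / κ * ‖divV ζ‖ ^ 2 := by positivity
      have hC : (0:ℝ) ≤ ν * ‖curl θ‖ ^ 2 := by positivity
      have hQ : (0:ℝ) ≤ c₀ * ‖q‖ ^ 2 := by positivity
      have hθ2 : (0:ℝ) ≤ ‖θ‖ ^ 2 := sq_nonneg _
      have hP : (0:ℝ) ≤ (1 / lam) * ‖ψ - α • q‖ ^ 2 := by positivity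
      linarith [hkey, e_r, hA, hB, hD, hC, hQ, hθ2, hP]
    calc Real.sqrt _ ≤ Real.sqrt (2 * biotBrinkmanNormXSq μ lam κ ν c₀ α eps divV curl
          (γ, ζ, θ, ψ, q)) := Real.sqrt_le_sqrt hmono
      _ = Real.sqrt 2 * Real.sqrt _ := Real.sqrt_mul (by norm_num) _
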